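/- Suppose (Π₁,H₁,Λ₁) and (Π₂,H₂,Λ₂) both satisfy [[A,B],[C,D]]·[Πᵢ;Hᵢ] = [ΠᵢΛᵢ;0]. Then the triple ([Π₁,Π₂], [H₁,H₂], diag(Λ₁,Λ₂)) is also a solution, and its range Im[Π₁,Π₂] equals Im Π₁ + Im Π₂. Consequently there exists a solution (Π_max, H_max, Λ_max) whose range Im Π_max contains the range of Π for every solution (Π,H,Λ). -/

import Mathlib

open Matrix

noncomputable section

/-- Map a complex matrix entrywise to rational functions. -/
def mc {a b : ℕ} (M : Matrix (Fin a) (Fin b) ℂ) : Matrix (Fin a) (Fin b) (RatFunc ℂ) :=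
  M.map (⇑(RatFunc.C : ℂ →+* RatFunc ℂ))

/-- The resolvent `(z I − M)⁻¹` as a matrix of rational functions. -/
def res {a : ℕ} (M : Matrix (Fin a) (Fin a) ℂ) : Matrix (Fin a) (Fin a) (RatFunc ℂ) :=
  ((Matrix.scalar (Fin a) (RatFunc.X : RatFunc ℂ)) - mc M)⁻¹

/-- The "anti-resolvent" `(z I + M)⁻¹`, used for para-hermitian conjugates. -/
def resneg {a : ℕ} (M : Matrix (Fin a) (Fin a) ℂ) : Matrix (Fin a) (Fin a) (RatFunc ℂ) :=
  ((Matrix.scalar (Fin a) (RatFunc.X : RatFunc ℂ)) + mc M)⁻¹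

/-- Observability of a pair `(C, A)`. -/
def Observable {p n : ℕ} (C : Matrix (Fin p) (Fin n) ℂ) (A : Matrix (Fin n) (Fin n) ℂ) : Prop :=
  ∀ v : Fin n → ℂ, (∀ k : ℕ, C *ᵥ ((A ^ k) *ᵥ v) = 0) → v = 0

/-- Controllability of a pair `(Λ, G)`. -/
def Controllable {r m : ℕ} (L : Matrix (Fin r) (Fin r) ℂ) (G : Matrix (Fin r) (Fin m) ℂ) : Prop :=
  ∀ y : Fin r → ℂ, (∀ k : ℕ, y ᵥ* ((L ^ k) * G) = 0) → y = 0

/-- The range (column space) of a matrix, as a submodule of `ℂⁿ`. -/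
def mrange {a b : ℕ} (M : Matrix (Fin a) (Fin b) ℂ) : Submodule ℂ (Fin a → ℂ) :=
  LinearMap.range M.mulVecLin

/-- The set of states reachable from the origin by a finite input sequence
producing identically zero output along the way (the minimal input-containing
subspace `C*(Σ)`). -/
def OutNullReach {n p q : ℕ} (A : Matrix (Fin n) (Fin n) ℂ) (B : Matrix (Fin n) (Fin q) ℂ)
    (C : Matrix (Fin p) (Fin n) ℂ) (D : Matrix (Fin p) (Fin q) ℂ) (x : Fin n → ℂ) : Prop :=
  ∃ (j : ℕ) (ξ : ℕ → (Fin n → ℂ)) (u : ℕ → (Fin q → ℂ)),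
    ξ 0 = 0 ∧ (∀ i < j, ξ (i + 1) = A *ᵥ ξ i + B *ᵥ u i ∧ C *ᵥ ξ i + D *ᵥ u i = 0) ∧ ξ j = x

lemma range_fromColumns {n r₁ r₂ : ℕ} (P₁ : Matrix (Fin n) (Fin r₁) ℂ)
    (P₂ : Matrix (Fin n) (Fin r₂) ℂ) :
    LinearMap.range (fromCols P₁ P₂).mulVecLin = mrange P₁ ⊔ mrange P₂ := by
  apply le_antisymm
  · rintro x ⟨v, rfl⟩
    have : fromCols P₁ P₂ *ᵥ v = P₁ *ᵥ (v ∘ Sum.inl) + P₂ *ᵥ (v ∘ Sum.inr) := by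
      have hv : v = Sum.elim (v ∘ Sum.inl) (v ∘ Sum.inr) := by
        ext (i | i) <;> rfl
      conv_lhs => rw [hv]
      rw [fromCols_mulVec_sumElim]
    simp only [mulVecLin_apply, this]
    exact Submodule.add_mem _ (Submodule.mem_sup_left ⟨v ∘ Sum.inl, rfl⟩)
      (Submodule.mem_sup_right ⟨v ∘ Sum.inr, rfl⟩)
  · apply sup_le
    · rintro x ⟨v, rfl⟩
      refine ⟨Sum.elim v 0, ?_⟩
      simp [mulVecLin_apply]
    · rintro x ⟨v, rfl⟩
      refine ⟨Sum.elim 0 v, ?_⟩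
      simp [mulVecLin_apply]

lemma range_submatrix_equiv {n : ℕ} {α β : Type*} [Fintype α] [Fintype β] [DecidableEq α]
    (M : Matrix (Fin n) α ℂ) (e : β ≃ α) :
    LinearMap.range (M.submatrix id e).mulVecLin = LinearMap.range M.mulVecLin := by
  apply le_antisymm
  · rintro x ⟨v, rfl⟩
    exact ⟨v ∘ e.symm, by simp [mulVecLin_apply, submatrix_mulVec_equiv]⟩
  · rintro x ⟨v, rfl⟩
    refine ⟨v ∘ e, ?_⟩
    simp only [mulVecLin_apply, submatrix_mulVec_equiv]
    have : (v ∘ e) ∘ e.symm = v := by ext j; simp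
    rw [this]
    rfl

/-- concatenation of two solutions of the zero equation is a solution whose
range is the join of the ranges; consequently a range-maximal solution exists. -/
theorem stmt1 {n p q r₁ r₂ : ℕ}
    (A : Matrix (Fin n) (Fin n) ℂ) (B : Matrix (Fin n) (Fin q) ℂ)
    (C : Matrix (Fin p) (Fin n) ℂ) (D : Matrix (Fin p) (Fin q) ℂ)
    (P₁ : Matrix (Fin n) (Fin r₁) ℂ) (H₁ : Matrix (Fin q) (Fin r₁) ℂ) (Λ₁ : Matrix (Fin r₁) (Fin r₁) ℂ)
    (P₂ : Matrix (Fin n) (Fin r₂) ℂ) (H₂ : Matrix (Fin q) (Fin r₂) ℂ) (Λ₂ : Matrix (Fin r₂) (Fin r₂) ℂ)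
    (h11 : A * P₁ + B * H₁ = P₁ * Λ₁) (h12 : C * P₁ + D * H₁ = 0)
    (h21 : A * P₂ + B * H₂ = P₂ * Λ₂) (h22 : C * P₂ + D * H₂ = 0) :
    (A * fromCols P₁ P₂ + B * fromCols H₁ H₂
        = fromCols P₁ P₂ * fromBlocks Λ₁ 0 0 Λ₂
      ∧ C * fromCols P₁ P₂ + D * fromCols H₁ H₂ = 0)
    ∧ LinearMap.range (fromCols P₁ P₂).mulVecLin = mrange P₁ ⊔ mrange P₂
    ∧ ∃ (s : ℕ) (Pmax : Matrix (Fin n) (Fin s) ℂ) (Hmax : Matrix (Fin q) (Fin s) ℂ)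
        (Λmax : Matrix (Fin s) (Fin s) ℂ),
        A * Pmax + B * Hmax = Pmax * Λmax ∧ C * Pmax + D * Hmax = 0 ∧
        ∀ (t : ℕ) (P : Matrix (Fin n) (Fin t) ℂ) (H : Matrix (Fin q) (Fin t) ℂ)
          (L : Matrix (Fin t) (Fin t) ℂ),
          A * P + B * H = P * L → C * P + D * H = 0 → mrange P ≤ mrange Pmax := by
  refine ⟨⟨?_, ?_⟩, range_fromColumns P₁ P₂, ?_⟩
  · rw [mul_fromCols, mul_fromCols, fromCols_mul_fromBlocks]
    ext i (j | j) <;>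
      simp [← h11, ← h21, Matrix.add_apply]
  · rw [mul_fromCols, mul_fromCols]
    ext i (j | j)
    · have := congrFun (congrFun h12 i) j
      simpa [Matrix.add_apply] using this
    · have := congrFun (congrFun h22 i) j
      simpa [Matrix.add_apply] using this
  · -- existence of a range-maximal solution
    set S : Set (Submodule ℂ (Fin n → ℂ)) :=
      {W | ∃ (s : ℕ) (P : Matrix (Fin n) (Fin s) ℂ) (H : Matrix (Fin q) (Fin s) ℂ)
            (L : Matrix (Fin s) (Fin s) ℂ),
            A * P + B * H = P * L ∧ C * P + D * H = 0 ∧ W = mrange P} with hS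
    have hne : S.Nonempty := by
      refine ⟨mrange (0 : Matrix (Fin n) (Fin 0) ℂ), 0, 0, 0, 0, ?_, ?_, rfl⟩
      · ext i j; exact absurd j.2 (by omega)
      · ext i j; exact absurd j.2 (by omega)
    -- closure under join
    have hjoin : ∀ W₁ ∈ S, ∀ W₂ ∈ S, W₁ ⊔ W₂ ∈ S := by
      rintro W₁ ⟨s₁, Q₁, G₁, L₁, e11, e12, rfl⟩ W₂ ⟨s₂, Q₂, G₂, L₂, e21, e22, rfl⟩
      set e : Fin (s₁ + s₂) ≃ (Fin s₁ ⊕ Fin s₂) := finSumFinEquiv.symm with he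
      refine ⟨s₁ + s₂, (fromCols Q₁ Q₂).submatrix id e,
        (fromCols G₁ G₂).submatrix id e,
        (fromBlocks L₁ 0 0 L₂).submatrix e e, ?_, ?_, ?_⟩
      · have key : A * fromCols Q₁ Q₂ + B * fromCols G₁ G₂
            = fromCols Q₁ Q₂ * fromBlocks L₁ 0 0 L₂ := by
          rw [mul_fromCols, mul_fromCols, fromCols_mul_fromBlocks]
          ext i (j | j) <;> simp [← e11, ← e21, Matrix.add_apply]
        calc A * (fromCols Q₁ Q₂).submatrix id e + B * (fromCols G₁ G₂).submatrix id e
            = (A.submatrix id (Equiv.refl _)) * ((fromCols Q₁ Q₂).submatrix (Equiv.refl _) e)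
              + (B.submatrix id (Equiv.refl _)) * ((fromCols G₁ G₂).submatrix (Equiv.refl _) e) := by
                simp [submatrix_id_id]
          _ = (A * fromCols Q₁ Q₂).submatrix id e + (B * fromCols G₁ G₂).submatrix id e := by
                rw [submatrix_mul_equiv, submatrix_mul_equiv]
          _ = (A * fromCols Q₁ Q₂ + B * fromCols G₁ G₂).submatrix id e := rfl
          _ = (fromCols Q₁ Q₂ * fromBlocks L₁ 0 0 L₂).submatrix id e := by rw [key]
          _ = (fromCols Q₁ Q₂).submatrix id e * (fromBlocks L₁ 0 0 L₂).submatrix e e := by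
                rw [submatrix_mul_equiv]
      · have key : C * fromCols Q₁ Q₂ + D * fromCols G₁ G₂ = 0 := by
          rw [mul_fromCols, mul_fromCols]
          ext i (j | j)
          · simpa [Matrix.add_apply] using congrFun (congrFun e12 i) j
          · simpa [Matrix.add_apply] using congrFun (congrFun e22 i) j
        calc C * (fromCols Q₁ Q₂).submatrix id e + D * (fromCols G₁ G₂).submatrix id e
            = (C.submatrix id (Equiv.refl _)) * ((fromCols Q₁ Q₂).submatrix (Equiv.refl _) e)
              + (D.submatrix id (Equiv.refl _)) * ((fromCols G₁ G₂).submatrix (Equiv.refl _) e) := by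
                simp [submatrix_id_id]
          _ = (C * fromCols Q₁ Q₂ + D * fromCols G₁ G₂).submatrix id e := by
                rw [submatrix_mul_equiv, submatrix_mul_equiv]; rfl
          _ = 0 := by rw [key]; rfl
      · rw [show mrange ((fromCols Q₁ Q₂).submatrix id e)
            = LinearMap.range ((fromCols Q₁ Q₂).submatrix id e).mulVecLin from rfl,
          range_submatrix_equiv, range_fromColumns]
    -- pick a maximal element of S
    obtain ⟨W, hW, hmax⟩ := (IsWellFounded.wf (α := Submodule ℂ (Fin n → ℂ))
      (r := (· > ·))).has_min S hne
    obtain ⟨s, Pmax, Hmax, Λmax, hs1, hs2, hWeq⟩ := hW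
    refine ⟨s, Pmax, Hmax, Λmax, hs1, hs2, ?_⟩
    intro t P H L ht1 ht2
    have hPS : mrange P ∈ S := ⟨t, P, H, L, ht1, ht2, rfl⟩
    have hjoinS : W ⊔ mrange P ∈ S := hWeq ▸ hjoin _ (hWeq ▸ ⟨s, Pmax, Hmax, Λmax, hs1, hs2, hWeq⟩) _ hPS
    have hnotlt := hmax _ hjoinS
    have : W ⊔ mrange P = W := by
      by_contra hne'
      exact hnotlt (lt_of_le_of_ne le_sup_left (Ne.symm hne'))
    rw [← hWeq]
    calc mrange P ≤ W ⊔ mrange P := le_sup_right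
      _ = W := this
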